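/- For integers $100 \le k \le n/2$, we have $\binom{k}{k/2}\binom{n}{k/8}\left(\frac{k}{8}\left(\frac1n + \frac1{n^3}\right)\right)^{k/2} \le (1.5 k/n)^{3k/8}$, where $k$ is divisible by $8$. -/

import Mathlib

lemma aux_choose_le_two_pow (n i : ℕ) : n.choose i ≤ 2 ^ n := by
  rcases le_or_gt i n with h | h
  · calc n.choose i ≤ ∑ j ∈ Finset.range (n+1), n.choose j :=
        Finset.single_le_sum (fun j _ => Nat.zero_le _) (Finset.mem_range.2 (by omega))
      _ = 2 ^ n := Nat.sum_range_choose n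
  · simp [Nat.choose_eq_zero_of_lt h]

lemma aux_pow_self_le (m : ℕ) : (m : ℝ) ^ m ≤ 3 ^ m * (m.factorial : ℝ) := by
  induction m with
  | zero => norm_num
  | succ m ih =>
    have key : ((m : ℝ) + 1) ^ m ≤ 3 * (m : ℝ) ^ m := by
      rcases Nat.eq_zero_or_pos m with rfl | hm
      · norm_num
      · have hM : (0 : ℝ) < m := by exact_mod_cast hm
        have h1 : (m : ℝ) + 1 = m * (1 + 1 / m) := by field_simp
        have h2 : (1 + 1 / (m : ℝ)) ^ m ≤ Real.exp 1 := by
          calc (1 + 1 / (m : ℝ)) ^ m ≤ (Real.exp (1 / m)) ^ m := by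
                apply pow_le_pow_left₀ (by positivity)
                have := Real.add_one_le_exp (1 / (m : ℝ)); linarith
            _ = Real.exp 1 := by
                rw [← Real.exp_nat_mul]
                congr 1
                field_simp
        have h3 : Real.exp 1 ≤ 3 := by
          have := Real.exp_one_lt_d9; linarith
        calc ((m : ℝ) + 1) ^ m = (m : ℝ) ^ m * (1 + 1 / m) ^ m := by
              rw [h1, mul_pow]
          _ ≤ (m : ℝ) ^ m * 3 := by
              have : (0:ℝ) ≤ (m:ℝ)^m := by positivity
              nlinarith [h2, h3]
          _ = 3 * (m : ℝ) ^ m := by ring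
    have hfac : (0 : ℝ) ≤ (m.factorial : ℝ) := by positivity
    calc ((m + 1 : ℕ) : ℝ) ^ (m + 1) = ((m : ℝ) + 1) * ((m : ℝ) + 1) ^ m := by
          push_cast; ring
      _ ≤ ((m : ℝ) + 1) * (3 * (m : ℝ) ^ m) := by
          have : (0:ℝ) ≤ (m:ℝ) + 1 := by positivity
          nlinarith [key]
      _ ≤ ((m : ℝ) + 1) * (3 * (3 ^ m * m.factorial)) := by
          have : (0:ℝ) ≤ (m:ℝ) + 1 := by positivity
          nlinarith [ih]
      _ = 3 ^ (m + 1) * ((m + 1).factorial : ℝ) := by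
          rw [Nat.factorial_succ]; push_cast; ring

/-- Counting estimate: for `100 ≤ k ≤ n/2` with `8 ∣ k`,
`C(k, k/2) C(n, k/8) (k/8 (1/n + 1/n³))^{k/2} ≤ (1.5 k/n)^{3k/8}`. -/
theorem stmt_17 (n k : ℕ) (h100 : 100 ≤ k) (hk : 2 * k ≤ n) (h8 : 8 ∣ k) :
    (k.choose (k / 2) : ℝ) * (n.choose (k / 8)) *
        ((k : ℝ) / 8 * (1 / n + 1 / (n : ℝ) ^ 3)) ^ (k / 2)
      ≤ (1.5 * k / n) ^ (3 * k / 8) := by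
  obtain ⟨m, rfl⟩ := h8
  have hm : 13 ≤ m := by omega
  have e1 : 8 * m / 2 = 4 * m := by omega
  have e2 : 8 * m / 8 = m := by omega
  have e3 : 3 * (8 * m) / 8 = 3 * m := by omega
  rw [e1, e2, e3]
  have hM : (13 : ℝ) ≤ m := by exact_mod_cast hm
  have hN : 16 * (m : ℝ) ≤ n := by
    have : 16 * m ≤ n := by omega
    exact_mod_cast this
  have hM0 : (0 : ℝ) < m := by linarith
  have hN0 : (0 : ℝ) < n := by linarith
  have hN208 : (208 : ℝ) ≤ n := by linarith
  -- bound factor 1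
  have b1 : ((8 * m).choose (4 * m) : ℝ) ≤ 256 ^ m := by
    have := aux_choose_le_two_pow (8 * m) (4 * m)
    calc ((8 * m).choose (4 * m) : ℝ) ≤ (2 : ℝ) ^ (8 * m) := by exact_mod_cast this
      _ = 256 ^ m := by rw [pow_mul]; norm_num
  -- bound factor 2
  have b2 : (n.choose m : ℝ) ≤ (3 * n / m) ^ m := by
    have h1 : (n.choose m : ℝ) ≤ (n : ℝ) ^ m / m.factorial := Nat.choose_le_pow_div m n
    have h2 : ((m : ℝ) / 3) ^ m ≤ m.factorial := by
      have := aux_pow_self_le m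
      rw [div_pow, div_le_iff₀ (by positivity)]
      linarith [this]
    have hfac : (0 : ℝ) < m.factorial := by positivity
    calc (n.choose m : ℝ) ≤ (n : ℝ) ^ m / m.factorial := h1
      _ ≤ (n : ℝ) ^ m / ((m : ℝ) / 3) ^ m := by
          apply div_le_div_of_nonneg_left (by positivity) (by positivity) h2
      _ = (3 * n / m) ^ m := by
          rw [← div_pow]
          congr 1
          field_simp
  -- bound factor 3
  have base3 : ((8 * m : ℕ) : ℝ) / 8 * (1 / n + 1 / (n : ℝ) ^ 3) ≤ 1.1 * m / n := by
    have h1 : 1 / (n : ℝ) ^ 3 ≤ 0.1 / n := by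
      rw [div_le_div_iff₀ (by positivity) hN0]
      have hsq : (208 : ℝ) ^ 2 ≤ (n : ℝ) ^ 2 := by nlinarith
      nlinarith
    have h2 : ((8 * m : ℕ) : ℝ) / 8 = m := by push_cast; ring
    rw [h2]
    have : 1 / (n : ℝ) + 1 / (n : ℝ) ^ 3 ≤ 1.1 / n := by
      have : (1 : ℝ) / n + 0.1 / n = 1.1 / n := by ring
      linarith
    calc (m : ℝ) * (1 / n + 1 / (n : ℝ) ^ 3) ≤ (m : ℝ) * (1.1 / n) := by
          nlinarith
      _ = 1.1 * m / n := by ring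
  have base3nn : (0 : ℝ) ≤ ((8 * m : ℕ) : ℝ) / 8 * (1 / n + 1 / (n : ℝ) ^ 3) := by positivity
  have b3 : (((8 * m : ℕ) : ℝ) / 8 * (1 / n + 1 / (n : ℝ) ^ 3)) ^ (4 * m)
      ≤ (1.1 * m / n) ^ (4 * m) := pow_le_pow_left₀ base3nn base3 _
  -- combine
  have comb : ((8 * m).choose (4 * m) : ℝ) * (n.choose m) *
      (((8 * m : ℕ) : ℝ) / 8 * (1 / n + 1 / (n : ℝ) ^ 3)) ^ (4 * m)
      ≤ 256 ^ m * (3 * n / m) ^ m * (1.1 * m / n) ^ (4 * m) := by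
    have c1 : (0 : ℝ) ≤ ((8 * m).choose (4 * m) : ℝ) := by positivity
    have c2 : (0 : ℝ) ≤ (n.choose m : ℝ) := by positivity
    apply mul_le_mul (mul_le_mul b1 b2 c2 (by positivity)) b3 (by positivity) (by positivity)
  refine comb.trans ?_
  -- final: 256^m * (3n/m)^m * (1.1 m/n)^{4m} ≤ (1.5*(8m)/n)^{3m}
  have key : (256 : ℝ) ^ m * (3 * n / m) ^ m * (1.1 * m / n) ^ (4 * m)
      = (256 * (3 * n / m) * (1.1 * m / n) ^ 4) ^ m := by
    rw [mul_pow, mul_pow, ← pow_mul, mul_comm 4 m, pow_mul]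
  rw [key]
  have h12 : (1.5 : ℝ) * ((8 * m : ℕ) : ℝ) / n = 12 * m / n := by push_cast; ring
  have rhs : ((1.5 : ℝ) * ((8 * m : ℕ) : ℝ) / n) ^ (3 * m) = ((12 * m / n) ^ 3) ^ m := by
    rw [h12, pow_mul]
  rw [rhs]
  apply pow_le_pow_left₀
  · positivity
  · have lhs_eq : (256 : ℝ) * (3 * n / m) * (1.1 * m / n) ^ 4
        = 1124.4288 * ((m : ℝ) ^ 3 / n ^ 3) := by
      field_simp
      ring
    have rhs_eq : ((12 : ℝ) * m / n) ^ 3 = 1728 * ((m : ℝ) ^ 3 / n ^ 3) := by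
      field_simp; ring
    rw [lhs_eq, rhs_eq]
    have : (0 : ℝ) ≤ (m : ℝ) ^ 3 / n ^ 3 := by positivity
    nlinarith
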